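/- arXiv:1601.00029 — 2 statements merged into one kernel-verified Lean document; each statement's English description precedes it below -/
import Mathlib

section
/- Theorem 5 (existence part): For every positive integer n and every positive integer m that is either odd or equal to 2, there exists an order-m Hadamard hypermatrix of side length 2^n: a hypermatrix H : (Fin m → Fin (2^n)) → ℂ with every entry equal to −1 or 1 such that the BM product of the m-tuple (H, H^{⊤^{m−1}}, …, H^{⊤^2}, H^⊤) has entry 2^n at every constant index and entry 0 at every non-constant index. -/
set_option maxHeartbeats 2000000

/-! Auxiliary definitions and lemmas for the construction of Hadamard hypermatrices. -/

noncomputable def epsC (x : ZMod 2) : ℂ := if x = 0 then 1 else -1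

lemma epsC_zero : epsC 0 = 1 := by simp [epsC]

lemma epsC_add (a b : ZMod 2) : epsC (a + b) = epsC a * epsC b := by
  have ha : a = 0 ∨ a = 1 := by revert a; decide
  have hb : b = 0 ∨ b = 1 := by revert b; decide
  rcases ha with rfl | rfl <;> rcases hb with rfl | rfl <;>
    simp [epsC, show (1+1 : ZMod 2) = 0 from rfl]

lemma epsC_sum {α : Type*} (s : Finset α) (f : α → ZMod 2) :
    epsC (∑ x ∈ s, f x) = ∏ x ∈ s, epsC (f x) := by
  classical
  induction s using Finset.induction_on with
  | empty => simp [epsC]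
  | insert a s h ih => rw [Finset.sum_insert h, Finset.prod_insert h, epsC_add, ih]

lemma zmod2_cases (c : ZMod 2) : c = 0 ∨ c = 1 := by revert c; decide

lemma zmod2_prod01 {α : Type*} [DecidableEq α] (s : Finset α) (f : α → ZMod 2) :
    ∏ x ∈ s, f x = if ∀ x ∈ s, f x = 1 then 1 else 0 := by
  split_ifs with h
  · exact Finset.prod_eq_one h
  · push_neg at h
    obtain ⟨x, hx, hfx⟩ := h
    exact Finset.prod_eq_zero hx ((zmod2_cases (f x)).resolve_right hfx)

def zmodFin2 : ZMod 2 ≃ Fin 2 where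
  toFun z := ⟨z.val, ZMod.val_lt z⟩
  invFun x := (x.val : ZMod 2)
  left_inv := by decide
  right_inv := by decide

def bitsE (n : ℕ) : Fin (2 ^ n) ≃ (Fin n → ZMod 2) :=
  finFunctionFinEquiv.symm.trans (Equiv.piCongrRight fun _ => zmodFin2.symm)

def Dslice (m : ℕ) [NeZero m] (z : Fin m → ZMod 2) : ZMod 2 :=
  (1 + ∑ s : Fin m, if s = 1 then 0 else z s)
  + ∑ a : Fin m, ∏ i : Fin m,
      if i = 0 then 1 else (if i.val ≤ a.val then 1 + z (1 + i) else z (1 + i))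

lemma Dslice_blind {m : ℕ} [NeZero m] (z z' : Fin m → ZMod 2)
    (h : ∀ s, s ≠ 1 → z s = z' s) : Dslice m z = Dslice m z' := by
  unfold Dslice
  congr 1
  · congr 1
    apply Finset.sum_congr rfl
    intro s _
    by_cases hs : s = 1 <;> simp [hs, h s]
  · apply Finset.sum_congr rfl
    intro a _
    apply Finset.prod_congr rfl
    intro i _
    by_cases hi : i = 0
    · simp [hi]
    · have h1i : (1 : Fin m) + i ≠ 1 := by
        intro hc
        exact hi (by simpa using (add_right_inj (1 : Fin m)).mp (by simpa using hc))
      simp only [if_neg hi]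
      rw [h _ h1i]

def validP {m : ℕ} [NeZero m] (z : Fin m → ZMod 2) (p : Fin m × Fin m) : Prop :=
  ∀ i : Fin m, i ≠ 0 → z (p.1 + i) = if i.val ≤ p.2.val then 0 else 1

instance validP_dec {m : ℕ} [NeZero m] (z : Fin m → ZMod 2) :
    DecidablePred (validP z) := fun _ => by unfold validP; infer_instance

lemma sum_filter_nonconst {m : ℕ} [NeZero m] (z : Fin m → ZMod 2)
    (h : ¬ ∀ s t : Fin m, z s = z t) :
    ∑ p ∈ Finset.univ.filter (validP z), (1 : ZMod 2) = 0 := by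
  obtain ⟨m', rfl⟩ : ∃ m', m = m' + 1 :=
    ⟨m - 1, (Nat.succ_pred_eq_of_ne_zero (NeZero.ne m)).symm⟩
  have hm2 : 1 ≤ m' := by
    by_contra hc
    push_neg at hc
    interval_cases m'
    exact h fun s t => by rw [Fin.ext (show s.val = t.val by omega)]
  have hval1 : (1 : Fin (m' + 1)).val = 1 := by
    rw [Fin.val_one']; exact Nat.mod_eq_of_lt (by omega)
  have h10 : (1 : Fin (m' + 1)) ≠ 0 := by
    intro hc; have := congrArg Fin.val hc; rw [hval1] at this; simp at this
  have hconst : ∀ (k : Fin (m' + 1)) (c : ZMod 2), z k = c →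
      (∀ i : Fin (m' + 1), i ≠ 0 → z (k + i) = c) → False := by
    intro k c hk hall
    apply h
    have hz : ∀ s, z s = c := by
      intro s
      by_cases hs : s = k
      · rw [hs, hk]
      · have hne : s - k ≠ 0 := fun hc => hs (sub_eq_zero.mp hc)
        have := hall (s - k) hne
        rwa [add_sub_cancel] at this
    intro s t; rw [hz s, hz t]
  have key1 : ∀ p : Fin (m'+1) × Fin (m'+1), validP z p → z p.1 = 1 → p.2 ≠ 0 := by
    intro p hv hz h2
    apply hconst p.1 1 hz
    intro i hi
    have := hv i hi
    rw [h2] at this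
    have hiv : ¬ i.val ≤ (0 : Fin (m'+1)).val := by
      simp only [Fin.val_zero, Nat.le_zero]
      exact fun hc => hi (Fin.ext (by simpa using hc))
    rwa [if_neg hiv] at this
  have key0 : ∀ p : Fin (m'+1) × Fin (m'+1), validP z p → z p.1 = 0 → p.2.val ≠ m' := by
    intro p hv hz h2
    apply hconst p.1 0 hz
    intro i hi
    have := hv i hi
    rwa [if_pos (by omega : i.val ≤ p.2.val)] at this
  set g : Fin (m'+1) × Fin (m'+1) → Fin (m'+1) × Fin (m'+1) :=
    fun p => if z p.1 = 1 then (p.1 + 1, p.2 - 1) else (p.1 - 1, p.2 + 1) with hg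
  have hgb1 : ∀ p : Fin (m'+1) × Fin (m'+1), z p.1 = 1 → g p = (p.1 + 1, p.2 - 1) :=
    fun p h' => by rw [hg]; exact if_pos h'
  have hgb2 : ∀ p : Fin (m'+1) × Fin (m'+1), z p.1 = 0 → g p = (p.1 - 1, p.2 + 1) :=
    fun p h' => by rw [hg]; exact if_neg (by rw [h']; decide)
  have hz_next : ∀ p : Fin (m'+1) × Fin (m'+1), validP z p → z p.1 = 1 →
      z (p.1 + 1) = 0 := by
    intro p hv hz
    have hav : 1 ≤ p.2.val := Nat.one_le_iff_ne_zero.mpr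
      (fun hc0 => key1 p hv hz (Fin.ext (by simpa using hc0)))
    have := hv 1 h10
    rwa [hval1, if_pos hav] at this
  have hz_prev : ∀ p : Fin (m'+1) × Fin (m'+1), validP z p → z p.1 = 0 →
      z (p.1 - 1) = 1 := by
    intro p hv hz
    have hmlt : p.2.val < m' := by
      have := p.2.isLt
      have := key0 p hv hz
      omega
    have hlast0 : (Fin.last m' : Fin (m'+1)) ≠ 0 := by
      intro hc
      have := congrArg Fin.val hc
      simp only [Fin.val_last, Fin.val_zero] at this
      omega
    have := hv (Fin.last m') hlast0
    rw [if_neg (by simp only [Fin.val_last]; omega)] at this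
    have harg : p.1 + Fin.last m' = p.1 - 1 := by
      have hl : (Fin.last m' : Fin (m'+1)) = -1 := by
        apply eq_neg_of_add_eq_zero_left
        exact Fin.last_add_one m'
      rw [hl, sub_eq_add_neg]
    rwa [harg] at this
  have hval_mem : ∀ p : Fin (m'+1) × Fin (m'+1), validP z p → validP z (g p) := by
    intro p hv
    rcases zmod2_cases (z p.1) with hz | hz
    · rw [hgb2 p hz]
      have hanl : p.2 ≠ Fin.last m' := fun hc => key0 p hv hz (by rw [hc]; rfl)
      have hsub : (p.2 + 1).val = p.2.val + 1 := by rw [Fin.val_add_one, if_neg hanl]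
      intro i hi
      simp only
      by_cases hi1 : i = 1
      · rw [hi1, sub_add_cancel, hz, hval1, if_pos (by rw [hsub]; omega)]
      · have him1 : i - 1 ≠ 0 := fun hc => hi1 (sub_eq_zero.mp hc)
        have hivne : i.val ≠ 0 := fun hc => hi (Fin.ext (by simpa using hc))
        have hsubi : (i - 1).val = i.val - 1 := by
          rw [Fin.coe_sub_one, if_neg (fun hc => hi (by rw [hc]))]
        have harg : p.1 - 1 + i = p.1 + (i - 1) := by abel
        rw [harg, hv (i - 1) him1, hsubi, hsub]
        exact if_congr (by omega) rfl rfl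
    · rw [hgb1 p hz]
      have ha0 : p.2 ≠ 0 := key1 p hv hz
      have hav : 1 ≤ p.2.val := Nat.one_le_iff_ne_zero.mpr
        (fun hc0 => ha0 (Fin.ext (by simpa using hc0)))
      have hsub : (p.2 - 1).val = p.2.val - 1 := by rw [Fin.coe_sub_one, if_neg ha0]
      intro i hi
      simp only
      by_cases hilast : i = Fin.last m'
      · have h1i : (1 : Fin (m'+1)) + i = 0 := by
          rw [hilast, add_comm (1 : Fin (m'+1)) (Fin.last m')]; exact Fin.last_add_one m'
        have harg : p.1 + 1 + i = p.1 := by rw [add_assoc, h1i, add_zero]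
        rw [harg, hz, hsub]
        rw [if_neg (by
          simp only [hilast, Fin.val_last]
          have := p.2.isLt
          omega)]
      · have hv1i : ((1 : Fin (m'+1)) + i).val = i.val + 1 := by
          rw [add_comm (1 : Fin (m'+1)) i, Fin.val_add_one, if_neg hilast]
        have h1i0 : (1 : Fin (m'+1)) + i ≠ 0 := by
          intro hc
          have := congrArg Fin.val hc
          rw [hv1i] at this
          simp at this
        rw [add_assoc, hv (1 + i) h1i0, hv1i, hsub]
        exact if_congr (by omega) rfl rfl
  apply Finset.sum_involution (g := fun p _ => g p)
  · intro a _; decide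
  · intro p hp _
    rcases Finset.mem_filter.mp hp with ⟨-, hv⟩
    rcases zmod2_cases (z p.1) with hz | hz
    · rw [hgb2 p hz]
      intro hc
      have h2 := congrArg (fun q : Fin (m'+1) × Fin (m'+1) => (q.2).val) hc
      have hanl : p.2 ≠ Fin.last m' := fun hc' => key0 p hv hz (by rw [hc']; rfl)
      have hsub : (p.2 + 1).val = p.2.val + 1 := by rw [Fin.val_add_one, if_neg hanl]
      simp only [hsub] at h2
      omega
    · rw [hgb1 p hz]
      intro hc
      have h2 := congrArg (fun q : Fin (m'+1) × Fin (m'+1) => (q.2).val) hc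
      have ha0 : p.2 ≠ 0 := key1 p hv hz
      have hav : 1 ≤ p.2.val := Nat.one_le_iff_ne_zero.mpr
        (fun hc0 => ha0 (Fin.ext (by simpa using hc0)))
      have hsub : (p.2 - 1).val = p.2.val - 1 := by rw [Fin.coe_sub_one, if_neg ha0]
      simp only [hsub] at h2
      omega
  · intro p hp
    rcases Finset.mem_filter.mp hp with ⟨-, hv⟩
    exact Finset.mem_filter.mpr ⟨Finset.mem_univ _, hval_mem p hv⟩
  · intro p hp
    rcases Finset.mem_filter.mp hp with ⟨-, hv⟩
    rcases zmod2_cases (z p.1) with hz | hz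
    · have h1 := hgb2 p hz
      have hz1 : z (p.1 - 1) = 1 := hz_prev p hv hz
      rw [h1, hgb1 _ (by simpa using hz1)]
      simp only [sub_add_cancel, add_sub_cancel_right]
    · have h1 := hgb1 p hz
      have hz1 : z (p.1 + 1) = 0 := hz_next p hv hz
      rw [h1, hgb2 _ (by simpa using hz1)]
      simp only [add_sub_cancel_right, sub_add_cancel]

lemma card_filter_const {m : ℕ} [NeZero m] (z : Fin m → ZMod 2)
    (hc : ∀ s t : Fin m, z s = z t) :
    (Finset.univ.filter (validP z)).card = m := by
  have hm1 : 0 < m := Nat.pos_of_ne_zero (NeZero.ne m)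
  set a₀ : Fin m := if z 0 = 1 then 0 else ⟨m - 1, by omega⟩ with ha₀
  have hiff : ∀ p : Fin m × Fin m, validP z p ↔ p.2 = a₀ := by
    intro p
    by_cases hm2 : m = 1
    · subst hm2
      constructor
      · intro _; exact Subsingleton.elim _ _
      · intro hp i hi
        exact absurd (Subsingleton.elim i 0) hi
    · rcases zmod2_cases (z 0) with hz | hz
      · have hzall : ∀ s, z s = 0 := fun s => (hc s 0).trans hz
        have ha₀v : a₀ = ⟨m - 1, by omega⟩ := by
          rw [ha₀, if_neg (by rw [hz]; decide)]
        constructor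
        · intro hv
          have hne : (⟨m - 1, by omega⟩ : Fin m) ≠ 0 := by
            intro hcc
            have := congrArg Fin.val hcc
            simp only [Fin.val_zero] at this
            omega
          have := hv ⟨m - 1, by omega⟩ hne
          rw [hzall] at this
          by_contra hpa
          have hlt : p.2.val < m - 1 := by
            rcases Nat.lt_or_ge p.2.val (m - 1) with h' | h'
            · exact h'
            · exact absurd (by
                rw [ha₀v]
                exact Fin.ext (show p.2.val = m - 1 by have := p.2.isLt; omega)) hpa
          rw [if_neg (by simp only; omega)] at this
          exact (by decide : (0 : ZMod 2) ≠ 1) this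
        · intro hpa i hi
          rw [hzall, if_pos (by rw [hpa, ha₀v]; have := i.isLt; simp only; omega)]
      · have hzall : ∀ s, z s = 1 := fun s => (hc s 0).trans hz
        have ha₀v : a₀ = 0 := by rw [ha₀, if_pos hz]
        constructor
        · intro hv
          by_contra hpa
          have hp2 : p.2 ≠ 0 := by rw [ha₀v] at hpa; exact hpa
          have := hv p.2 hp2
          rw [hzall, if_pos (le_refl _)] at this
          exact (by decide : (1 : ZMod 2) ≠ 0) this
        · intro hpa i hi
          have hiv : i.val ≠ 0 := fun hcc => hi (Fin.ext (by simpa using hcc))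
          rw [hzall, if_neg (by rw [hpa, ha₀v]; simp only [Fin.val_zero]; omega)]
  have hset : Finset.univ.filter (validP z) = Finset.univ ×ˢ {a₀} := by
    ext p
    rw [Finset.mem_filter, Finset.mem_product, Finset.mem_singleton]
    simp [hiff p]
  rw [hset, Finset.card_product]
  simp

lemma prod_valid {m : ℕ} [NeZero m] (z : Fin m → ZMod 2) (k a : Fin m) :
    (∏ i : Fin m, if i = 0 then 1
        else (if i.val ≤ a.val then 1 + z (k + i) else z (k + i)))
      = if validP z (k, a) then 1 else 0 := by
  have hiff : (∀ i ∈ Finset.univ, (if i = 0 then (1 : ZMod 2)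
      else (if i.val ≤ a.val then 1 + z (k + i) else z (k + i))) = 1)
      ↔ (∀ i : Fin m, i ≠ 0 → z (k + i) = if i.val ≤ a.val then 0 else 1) := by
    constructor
    · intro hall i hi
      have h1 := hall i (Finset.mem_univ i)
      rw [if_neg hi] at h1
      by_cases hc : i.val ≤ a.val
      · rw [if_pos hc] at h1
        rw [if_pos hc]
        have : ∀ c : ZMod 2, 1 + c = 1 → c = 0 := by decide
        exact this _ h1
      · rw [if_neg hc] at h1
        rw [if_neg hc]
        exact h1
    · intro hv i _
      by_cases hi : i = 0
      · rw [if_pos hi]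
      · rw [if_neg hi]
        have h1 := hv i hi
        by_cases hc : i.val ≤ a.val
        · rw [if_pos hc] at h1 ⊢
          rw [h1]; decide
        · rw [if_neg hc] at h1 ⊢
          exact h1
  rw [zmod2_prod01]
  by_cases hv : validP z (k, a)
  · rw [if_pos (hiff.mpr hv), if_pos hv]
  · rw [if_neg (fun hc => hv (hiff.mp hc) : ¬ _), if_neg hv]

lemma odd_cast_zmod2 {m : ℕ} (hm : Odd m) : (m : ZMod 2) = 1 := by
  obtain ⟨c, rfl⟩ := hm
  push_cast
  rw [show (2 : ZMod 2) = 0 by decide]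
  ring

lemma key_lemma {m : ℕ} [NeZero m] (hm : Odd m ∨ m = 2) (z : Fin m → ZMod 2) :
    ∑ t : Fin m, Dslice m (fun s => z (s + t))
      = if ∀ s t : Fin m, z s = z t then 0 else 1 := by
  have hsplit : ∑ t : Fin m, Dslice m (fun s => z (s + t))
      = (m : ZMod 2) * (1 + ∑ s : Fin m, z s) - (∑ s : Fin m, z s)
        + ((Finset.univ.filter (validP z)).card : ZMod 2) := by
    unfold Dslice
    rw [Finset.sum_add_distrib]
    congr 1
    · have h1 : ∀ t : Fin m,
          (1 + ∑ s : Fin m, if s = 1 then 0 else z (s + t))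
            = (1 + ∑ s : Fin m, z s) - z (1 + t) := by
        intro t
        have h2 : ∀ s : Fin m, (if s = 1 then 0 else z (s + t))
            = z (s + t) - (if s = 1 then z (s + t) else 0) := by
          intro s; split <;> simp
        rw [Finset.sum_congr rfl (fun s _ => h2 s), Finset.sum_sub_distrib,
          Finset.sum_ite_eq' Finset.univ (1 : Fin m) (fun s => z (s + t))]
        rw [if_pos (Finset.mem_univ _)]
        have h3 : ∑ s : Fin m, z (s + t) = ∑ s : Fin m, z s := by
          have := Equiv.sum_comp (Equiv.addRight t) z
          simpa using this
        rw [h3]; ring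
      rw [Finset.sum_congr rfl (fun t _ => h1 t), Finset.sum_sub_distrib,
        Finset.sum_const, Finset.card_univ, Fintype.card_fin, nsmul_eq_mul]
      congr 1
      have h4 : ∑ t : Fin m, z (1 + t) = ∑ s : Fin m, z s := by
        have := Equiv.sum_comp (Equiv.addLeft (1 : Fin m)) z
        simpa using this
      rw [h4]
    · have h4 : ∀ t a i : Fin m, (1 : Fin m) + i + t = 1 + t + i := by
        intro t a i; abel
      have h5 : ∀ t : Fin m,
          (∑ a : Fin m, ∏ i : Fin m, if i = 0 then 1
            else (if i.val ≤ a.val then 1 + z (1 + i + t) else z (1 + i + t)))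
          = ∑ a : Fin m, if validP z (1 + t, a) then 1 else 0 := by
        intro t
        refine Finset.sum_congr rfl (fun a _ => ?_)
        rw [← prod_valid z (1 + t) a]
        refine Finset.prod_congr rfl (fun i _ => ?_)
        rw [h4 t a i]
      rw [Finset.sum_congr rfl (fun t _ => h5 t)]
      have h6 : ∑ t : Fin m, (∑ a : Fin m, if validP z (1 + t, a) then 1 else 0)
          = ∑ k : Fin m, (∑ a : Fin m, if validP z (k, a) then (1 : ZMod 2) else 0) := by
        have := Equiv.sum_comp (Equiv.addLeft (1 : Fin m))
          (fun k => ∑ a : Fin m, if validP z (k, a) then (1 : ZMod 2) else 0)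
        exact this
      rw [h6, (Fintype.sum_prod_type
        (f := fun p : Fin m × Fin m => if validP z p then (1 : ZMod 2) else 0)).symm]
      rw [Finset.sum_boole]
  rw [hsplit]
  rcases hm with hodd | h2
  · rw [odd_cast_zmod2 hodd]
    by_cases hcst : ∀ s t : Fin m, z s = z t
    · rw [if_pos hcst, card_filter_const z hcst, odd_cast_zmod2 hodd]
      have : ∀ x : ZMod 2, 1 * (1 + x) - x + 1 = 0 := by decide
      exact this _
    · rw [if_neg hcst]
      have hc0 : ((Finset.univ.filter (validP z)).card : ZMod 2) = 0 := by
        have hs := sum_filter_nonconst z hcst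
        rwa [Finset.sum_const, nsmul_eq_mul, mul_one] at hs
      rw [hc0]
      have : ∀ x : ZMod 2, 1 * (1 + x) - x + 0 = 1 := by decide
      exact this _
  · subst h2
    rw [show ((2 : ℕ) : ZMod 2) = 0 by decide]
    by_cases hcst : ∀ s t : Fin 2, z s = z t
    · rw [if_pos hcst, card_filter_const z hcst]
      have hz0 : ∑ s : Fin 2, z s = 0 := by
        rw [Fin.sum_univ_two, hcst 1 0]
        have : ∀ c : ZMod 2, c + c = 0 := by decide
        exact this _
      rw [hz0]
      decide
    · rw [if_neg hcst]
      have hc0 : ((Finset.univ.filter (validP z)).card : ZMod 2) = 0 := by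
        have hs := sum_filter_nonconst z hcst
        rwa [Finset.sum_const, nsmul_eq_mul, mul_one] at hs
      rw [hc0]
      have hz1 : ∑ s : Fin 2, z s = 1 := by
        rw [Fin.sum_univ_two]
        have hne : z 0 ≠ z 1 := by
          intro he
          apply hcst
          have hall : ∀ u : Fin 2, z u = z 0 := by
            intro u
            fin_cases u
            · rfl
            · exact he.symm
          intro s t
          rw [hall s, hall t]
        have : ∀ a b : ZMod 2, a ≠ b → a + b = 1 := by decide
        exact this _ _ hne
      rw [hz1]
      decide

/-- The BM product of an `m`-tuple of order-`m` cubic hypermatrices over index type `I`. -/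
noncomputable def bmProd {m : ℕ} [NeZero m] {I : Type*} [Fintype I] [DecidableEq I]
    (A : Fin m → ((Fin m → I) → ℂ)) : (Fin m → I) → ℂ :=
  fun i => ∑ j : I, ∏ t : Fin m, A t (Function.update i (t + 1) j)

/-- The hypermatrix transpose (cyclic permutation of indices). -/
noncomputable def hTranspose {m : ℕ} [NeZero m] {I : Type*}
    (A : (Fin m → I) → ℂ) : (Fin m → I) → ℂ :=
  fun i => A (fun s => i (s - 1))

/-- The `m`-tuple `(H, H^{⊤^{m−1}}, …, H^{⊤^2}, H^⊤)` whose `t`-th member (0-based) is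
`H^{⊤^{(m−t) mod m}}`. -/
noncomputable def towerTuple {m : ℕ} [NeZero m] {I : Type*}
    (H : (Fin m → I) → ℂ) : Fin m → ((Fin m → I) → ℂ) :=
  fun t => hTranspose^[(m - t.val) % m] H

open Fin.NatCast in
lemma iterate_hT {m : ℕ} [NeZero m] {I : Type*} (k : ℕ) (A : (Fin m → I) → ℂ)
    (x : Fin m → I) :
    (hTranspose^[k] A) x = A (fun s => x (s - (k : Fin m))) := by
  induction k generalizing x with
  | zero => simp
  | succ k ih =>
    rw [Function.iterate_succ_apply']
    show (hTranspose^[k] A) (fun s => x (s - 1)) = _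
    rw [ih]
    congr 1
    funext s
    congr 1
    rw [Nat.cast_add, Nat.cast_one, sub_sub]

open Fin.NatCast in
lemma towerTuple_apply {m : ℕ} [NeZero m] {I : Type*} (H : (Fin m → I) → ℂ)
    (t : Fin m) (x : Fin m → I) :
    towerTuple H t x = H (fun s => x (s + t)) := by
  show (hTranspose^[(m - t.val) % m] H) x = _
  rw [iterate_hT]
  congr 1
  funext s
  congr 1
  have hcast : (((m - t.val) % m : ℕ) : Fin m) = -t := by
    apply Fin.ext
    rw [Fin.val_natCast, Fin.neg_def]
    exact Nat.mod_mod_of_dvd _ dvd_rfl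
  rw [hcast, sub_neg_eq_add]

lemma update_shift {m : ℕ} [NeZero m] {I : Type*} (x : Fin m → I) (t : Fin m) (j : I) :
    (fun s => Function.update x (t + 1) j (s + t))
      = Function.update (fun s => x (s + t)) 1 j := by
  funext s
  by_cases hs : s = 1
  · subst hs
    rw [show (1 : Fin m) + t = t + 1 from add_comm _ _, Function.update_self,
      Function.update_self]
  · rw [Function.update_of_ne hs]
    have hne : s + t ≠ t + 1 := by
      intro hc
      apply hs
      have h2 : s + t = 1 + t := by rw [hc]; abel
      exact add_right_cancel h2
    rw [Function.update_of_ne hne]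

/-- The Hadamard hypermatrix of order `m` and side length `2 ^ n`. -/
noncomputable def Hmat (m n : ℕ) [NeZero m] : (Fin m → Fin (2 ^ n)) → ℂ :=
  fun x => epsC (∑ κ : Fin n, bitsE n (x 1) κ * Dslice m (fun s => bitsE n (x s) κ))

lemma char_sum (n : ℕ) (v : Fin n → ZMod 2) :
    ∑ u : Fin n → ZMod 2, epsC (∑ κ : Fin n, u κ * v κ)
      = if v = 0 then (2 ^ n : ℂ) else 0 := by
  have h1 : ∀ u : Fin n → ZMod 2, epsC (∑ κ : Fin n, u κ * v κ)
      = ∏ κ : Fin n, epsC (u κ * v κ) := fun u => epsC_sum _ _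
  rw [Finset.sum_congr rfl (fun u _ => h1 u)]
  rw [show (Finset.univ : Finset (Fin n → ZMod 2))
    = Fintype.piFinset (fun _ => Finset.univ) from (Fintype.piFinset_univ).symm]
  have hps := Finset.prod_univ_sum (fun _ : Fin n => (Finset.univ : Finset (ZMod 2)))
    (fun κ b => epsC (b * v κ))
  rw [← hps]
  have h2 : ∀ κ : Fin n, (∑ b : ZMod 2, epsC (b * v κ)) = 1 + epsC (v κ) := by
    intro κ
    rw [show (Finset.univ : Finset (ZMod 2)) = {0, 1} from by decide]
    rw [Finset.sum_insert (by decide), Finset.sum_singleton, zero_mul, one_mul, epsC_zero]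
  rw [Finset.prod_congr rfl (fun κ _ => h2 κ)]
  by_cases hv : v = 0
  · rw [if_pos hv]
    have h3 : ∀ κ ∈ Finset.univ, 1 + epsC (v κ) = (2 : ℂ) := by
      intro κ _
      rw [hv, Pi.zero_apply, epsC_zero]
      norm_num
    rw [Finset.prod_congr rfl h3, Finset.prod_const, Finset.card_univ, Fintype.card_fin]
  · rw [if_neg hv]
    obtain ⟨κ0, hκ0⟩ : ∃ κ0, v κ0 ≠ 0 := by
      by_contra hcc
      push_neg at hcc
      exact hv (funext hcc)
    apply Finset.prod_eq_zero (Finset.mem_univ κ0)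
    rw [(zmod2_cases (v κ0)).resolve_left hκ0]
    simp [epsC]

/-- Theorem 5 (existence part): for every positive `n` and every positive `m` which is
odd or equal to `2`, there is an order-`m` Hadamard hypermatrix of side length `2^n`. -/
theorem exists_hadamard_hypermatrix {m : ℕ} [NeZero m] (hm : Odd m ∨ m = 2)
    (n : ℕ) (hn : 0 < n) :
    ∃ H : (Fin m → Fin (2 ^ n)) → ℂ,
      (∀ i, H i = 1 ∨ H i = -1) ∧
      (∀ i : Fin m → Fin (2 ^ n), (∀ s t : Fin m, i s = i t) →
        bmProd (towerTuple H) i = (2 ^ n : ℂ)) ∧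
      (∀ i : Fin m → Fin (2 ^ n), (¬ ∀ s t : Fin m, i s = i t) →
        bmProd (towerTuple H) i = 0) := by
  classical
  have master : ∀ i : Fin m → Fin (2 ^ n),
      bmProd (towerTuple (Hmat m n)) i
        = if (∀ s t : Fin m, i s = i t) then (2 ^ n : ℂ) else 0 := by
    intro i
    set w : Fin n → ZMod 2 := fun κ =>
      if (∀ s t : Fin m, bitsE n (i s) κ = bitsE n (i t) κ) then 0 else 1 with hw
    have step1 : bmProd (towerTuple (Hmat m n)) i
        = ∑ j : Fin (2 ^ n), epsC (∑ κ : Fin n, bitsE n j κ * w κ) := by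
      unfold bmProd
      refine Finset.sum_congr rfl (fun j _ => ?_)
      have hterm : ∀ t : Fin m,
          towerTuple (Hmat m n) t (Function.update i (t + 1) j)
            = epsC (∑ κ : Fin n,
                bitsE n j κ * Dslice m (fun s => bitsE n (i (s + t)) κ)) := by
        intro t
        rw [towerTuple_apply, update_shift]
        show epsC _ = _
        congr 1
        rw [Function.update_self]
        refine Finset.sum_congr rfl (fun κ _ => ?_)
        congr 1
        apply Dslice_blind
        intro s hs
        rw [Function.update_of_ne hs]
      rw [Finset.prod_congr rfl (fun t _ => hterm t), ← epsC_sum]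
      congr 1
      rw [Finset.sum_comm]
      refine Finset.sum_congr rfl (fun κ _ => ?_)
      rw [← Finset.mul_sum]
      congr 1
      have := key_lemma hm (fun s => bitsE n (i s) κ)
      exact this
    rw [step1]
    rw [Equiv.sum_comp (bitsE n) (fun u => epsC (∑ κ : Fin n, u κ * w κ))]
    rw [char_sum n w]
    have hcond : (w = 0) ↔ (∀ s t : Fin m, i s = i t) := by
      constructor
      · intro hw0 s t
        apply (bitsE n).injective
        funext κ
        have hκ := congrFun hw0 κ
        simp only [hw, Pi.zero_apply] at hκ
        by_cases hcase : ∀ s t : Fin m, bitsE n (i s) κ = bitsE n (i t) κ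
        · exact hcase s t
        · rw [if_neg hcase] at hκ
          exact absurd hκ (by decide)
      · intro hcst
        funext κ
        simp only [hw, Pi.zero_apply]
        rw [if_pos (fun s t => by rw [hcst s t])]
    by_cases hcc : ∀ s t : Fin m, i s = i t
    · rw [if_pos (hcond.mpr hcc), if_pos hcc]
    · rw [if_neg (fun hc => hcc (hcond.mp hc)), if_neg hcc]
  refine ⟨Hmat m n, ?_, ?_, ?_⟩
  · intro x
    unfold Hmat epsC
    split_ifs
    · exact Or.inl rfl
    · exact Or.inr rfl
  · intro i hi
    rw [master i, if_pos hi]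
  · intro i hi
    rw [master i, if_neg hi]
end

section
/- Theorem 5 (nonexistence part): For every even integer m > 2 there is no order-m Hadamard hypermatrix of side length 2: there is no H : (Fin m → Fin 2) → ℂ with every entry equal to −1 or 1 such that the BM product of the m-tuple (H, H^{⊤^{m−1}}, …, H^{⊤^2}, H^⊤) has entry 2 at every constant index and entry 0 at every non-constant index. -/
open Fin.NatCast in
lemma hTranspose_iterate {m : ℕ} [NeZero m] {I : Type*}
    (A : (Fin m → I) → ℂ) (k : ℕ) (i : Fin m → I) :
    hTranspose^[k] A i = A (fun s => i (s - (k : Fin m))) := by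
  induction k generalizing i with
  | zero => simp
  | succ n ih =>
    rw [Function.iterate_succ_apply']
    simp only [hTranspose]
    rw [ih]
    congr 1
    funext s
    congr 1
    push_cast
    rw [sub_sub]

/-- Theorem 5 (nonexistence part): for every even `m > 2` there is no order-`m`
Hadamard hypermatrix of side length `2`. -/
theorem no_hadamard_hypermatrix_even_order {m : ℕ} [NeZero m]
    (hmeven : Even m) (hm : 2 < m) :
    ¬ ∃ H : (Fin m → Fin 2) → ℂ,
      (∀ i, H i = 1 ∨ H i = -1) ∧
      (∀ i : Fin m → Fin 2, (∀ s t : Fin m, i s = i t) →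
        bmProd (towerTuple H) i = (2 : ℂ)) ∧
      (∀ i : Fin m → Fin 2, (¬ ∀ s t : Fin m, i s = i t) →
        bmProd (towerTuple H) i = 0) := by
  rintro ⟨H, h1, _h2, h3⟩
  obtain ⟨k, hk⟩ := hmeven
  have hm2 : m / 2 + m / 2 = m := by omega
  have hm2lt : m / 2 < m := by omega
  set c : Fin m := ⟨m / 2, hm2lt⟩ with hc
  have hcc : c + c = 0 := by
    ext
    simp [hc, Fin.add_def, hm2]
  have hc0 : c ≠ 0 := by
    intro h
    have := congrArg Fin.val h
    simp [hc] at this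
    omega
  classical
  set i₀ : Fin m → Fin 2 := fun u => if u = 0 ∨ u = c then 1 else 0 with hi
  have hiff1 : ∀ u : Fin m, u + c = 0 ↔ u = c := by
    intro u
    constructor
    · intro h
      have h' : u + c + c = 0 + c := by rw [h]
      rwa [add_assoc, hcc, add_zero, zero_add] at h'
    · rintro rfl; exact hcc
  have hiff2 : ∀ u : Fin m, u + c = c ↔ u = 0 := by
    intro u
    constructor
    · intro h
      have h' : u + c = 0 + c := by rw [h, zero_add]
      exact add_right_cancel h'
    · rintro rfl; rw [zero_add]
  have hper : ∀ u, i₀ (u + c) = i₀ u := by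
    intro u
    simp only [hi, hiff1, hiff2, or_comm]
  -- i₀ is nonconstant
  have honelt : 1 < m := by omega
  set o : Fin m := ⟨1, honelt⟩ with ho
  have hio : i₀ o = 0 := by
    have h1' : o ≠ 0 := by
      intro h; have := congrArg Fin.val h; simp [ho] at this
    have h2' : o ≠ c := by
      intro h; have := congrArg Fin.val h; simp [ho, hc] at this; omega
    simp [hi, h1', h2']
  have hi0 : i₀ 0 = 1 := by simp [hi]
  have hnc : ¬ ∀ s t : Fin m, i₀ s = i₀ t := by
    intro h
    have := h 0 o
    rw [hi0, hio] at this
    exact one_ne_zero this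
  have key := h3 i₀ hnc
  -- compute each product
  have hprod : ∀ j : Fin 2,
      ∏ t : Fin m, towerTuple H t (Function.update i₀ (t + 1) j) = 1 := by
    intro j
    set f : Fin m → ℂ :=
      fun t => towerTuple H t (Function.update i₀ (t + 1) j) with hf
    have hfy : ∀ t, f t = H (fun s => if s = 1 then j else i₀ (s + t)) := by
      intro t
      rw [hf]
      simp only []
      rw [towerTuple_apply]
      congr 1
      funext s
      rw [Function.update_apply]
      by_cases h : s = 1
      · subst h; simp [add_comm]
      · have h' : ¬(s + t = t + 1) := by
          rw [add_comm s t, add_right_inj]; exact h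
        simp [h, h']
    have hpair : ∀ t, f (t + c) = f t := by
      intro t
      rw [hfy, hfy]
      congr 1
      funext s
      by_cases h : s = 1
      · simp [h]
      · simp only [if_neg h]
        rw [← add_assoc, hper]
    have hsq : ∀ t, f t * f t = 1 := by
      intro t
      rw [hfy]
      rcases h1 (fun s => if s = 1 then j else i₀ (s + t)) with h | h <;> rw [h] <;> norm_num
    refine Finset.prod_ninvolution (fun a => a + c) ?_ ?_ ?_ ?_
    · intro a
      show f a * f (a + c) = 1
      rw [hpair]; exact hsq a
    · intro a _ h
      exact hc0 (by rwa [add_eq_left] at h)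
    · intro a; exact Finset.mem_univ _
    · intro a
      show a + c + c = a
      rw [add_assoc, hcc, add_zero]
  rw [bmProd] at key
  rw [Fin.sum_univ_two, hprod 0, hprod 1] at key
  norm_num at key
end
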